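/- Under gradient flow over the hierarchical tensor factorization objective, assume the unbalancedness magnitude at initialization (time t = 0) is zero. Then for every ν ∈ int(T), r ∈ [R_ν], and t ≥ 0: d/dt σ^(ν,r)(t) = σ^(ν,r)(t)^{2 − 2/L_ν} · L_ν · ⟨−∇L_H(W_H(t)), Ĉ^(ν,r)(t)⟩, where L_ν := |C(ν)| + 1 is the number of weight vectors in a local component at node ν and ⟨·,·⟩ is the Frobenius inner product. -/

import Mathlib

namespace HTF

/-- Rooted tree whose leaves are labeled by elements of `Fin N`. -/
inductive MTree (N : ℕ) : Type
  | leaf : Fin N → MTree N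
  | node : List (MTree N) → MTree N

noncomputable instance {N : ℕ} : DecidableEq (MTree N) := fun _ _ => Classical.dec _

namespace MTree

variable {N : ℕ}

/-- The list of leaf labels of the tree. -/
def leafList : MTree N → List (Fin N)
  | .leaf i => [i]
  | .node ts => ts.attach.flatMap fun t => t.1.leafList
decreasing_by simp only [MTree.node.sizeOf_spec]; have := List.sizeOf_lt_of_mem t.2; omega

/-- The label of a node: set of leaf indices appearing in its subtree. -/
def label (t : MTree N) : Finset (Fin N) := t.leafList.toFinset

/-- All nodes (subtrees) of the tree. -/
def nodes : MTree N → List (MTree N)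
  | .leaf i => [.leaf i]
  | .node ts => .node ts :: ts.attach.flatMap fun t => t.1.nodes
decreasing_by simp only [MTree.node.sizeOf_spec]; have := List.sizeOf_lt_of_mem t.2; omega

/-- The children of a node. -/
def children : MTree N → List (MTree N)
  | .leaf _ => []
  | .node ts => ts

/-- Interior (non-leaf) node. -/
def IsInterior : MTree N → Prop
  | .leaf _ => False
  | .node _ => True

/-- Every non-leaf node has at least one child. -/
def Branching : MTree N → Prop
  | .leaf _ => True
  | .node ts => ts ≠ [] ∧ ∀ t ∈ ts.attach, Branching t.1
decreasing_by simp only [MTree.node.sizeOf_spec]; have := List.sizeOf_lt_of_mem t.2; omega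

/-- A valid mode tree over `[N]`: it has exactly `N` leaves, labeled `{1},...,{N}`
(each index appearing exactly once), and interior nodes have children. -/
def Valid (t : MTree N) : Prop :=
  t.leafList.Nodup ∧ (∀ i : Fin N, i ∈ t.leafList) ∧ t.Branching

/-- The parent of node `ν` in the tree (first argument), if it exists. -/
noncomputable def parentIn : MTree N → MTree N → Option (MTree N)
  | .leaf _, _ => none
  | .node ts, ν =>
      if ν ∈ ts then some (.node ts)
      else ts.attach.findSome? fun t => parentIn t.1 ν
termination_by T _ => sizeOf T
decreasing_by simp only [MTree.node.sizeOf_spec]; have := List.sizeOf_lt_of_mem t.2; omega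

end MTree

open MTree

variable {N : ℕ} (D : Fin N → ℕ)

/-- Full index set of an order-`N` tensor with mode dimensions `D`. -/
abbrev Idx : Type := ∀ n, Fin (D n)

/-- The intermediate tensors `W^(ν,r)` of a hierarchical tensor factorization with
local-component numbers `R` and weight matrices `W` (columns indexed by `ℕ`).
An order-`|label ν|` tensor is represented as a function of a full index tuple that
only depends on the coordinates in `label ν`; with this representation, the tensor
product of tensors over disjoint mode sets is pointwise multiplication and the mode
permutation `π_ν` is the identity. -/
noncomputable def interm (R : MTree N → ℕ) (W : ∀ ν : MTree N, Fin (R ν) → ℕ → ℝ) :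
    MTree N → ℕ → Idx D → ℝ
  | .leaf i, r => fun x =>
      if h : R (.leaf i) = D i then W (.leaf i) (Fin.cast h.symm (x i)) r else 0
  | .node ts, r => fun x =>
      ∑ r' : Fin (R (.node ts)),
        W (.node ts) r' r * (ts.attach.map fun t => interm R W t.1 (r' : ℕ) x).prod
decreasing_by simp only [MTree.node.sizeOf_spec]; have := List.sizeOf_lt_of_mem t.2; omega

/-- The end tensor `W_H` of the hierarchical tensor factorization with mode tree `T`. -/
noncomputable def endT (R : MTree N → ℕ) (W : ∀ ν : MTree N, Fin (R ν) → ℕ → ℝ)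
    (T : MTree N) : Idx D → ℝ :=
  interm D R W T 0

/-- Entry `(i, j)` of the weight matrix at node `ν` (zero outside the row range). -/
noncomputable def went (R : MTree N → ℕ) (W : ∀ ν : MTree N, Fin (R ν) → ℕ → ℝ)
    (ν : MTree N) (i j : ℕ) : ℝ :=
  if h : i < R ν then W ν ⟨i, h⟩ j else 0

/-- `R_{Pa(ν)}` : the number of local components at the parent of `ν` in `T`
(`1` if `ν` is the root). -/
noncomputable def Rpar (R : MTree N → ℕ) (T ν : MTree N) : ℕ :=
  if ν = T then 1 else ((parentIn T ν).map R).getD 0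

/-- Replace the weight matrix at node `μ` by `A`, keeping all other weight matrices. -/
noncomputable def replace (R : MTree N → ℕ) (W : ∀ ν : MTree N, Fin (R ν) → ℕ → ℝ)
    (μ : MTree N) (A : Fin (R μ) → ℕ → ℝ) : ∀ ν : MTree N, Fin (R ν) → ℕ → ℝ :=
  fun ν => if h : ν = μ then fun i j => A (Fin.cast (congrArg R h) i) j else W ν

/-- Frobenius (Euclidean) inner product of order-`N` tensors. -/
noncomputable def tinner (A B : Idx D → ℝ) : ℝ := ∑ x, A x * B x

/-- Frobenius norm of an order-`N` tensor. -/
noncomputable def tnorm (A : Idx D → ℝ) : ℝ := Real.sqrt (∑ x, (A x) ^ 2)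

/-- Frobenius norm of an order-`|s|` tensor represented as a function of a full index
tuple depending only on the coordinates in `s` (so that the sum over the full index
set over-counts each entry `∏_{n ∉ s} D n` times). -/
noncomputable def rnorm (s : Finset (Fin N)) (A : Idx D → ℝ) : ℝ :=
  Real.sqrt ((∑ x, (A x) ^ 2) / ∏ n ∈ sᶜ, (D n : ℝ))

/-- Squared norm of the `r`'th column of the weight matrix at node `c`. -/
noncomputable def colSq (R : MTree N → ℕ) (W : ∀ ν : MTree N, Fin (R ν) → ℕ → ℝ)
    (c : MTree N) (r : ℕ) : ℝ :=
  ∑ i : Fin (R c), (W c i r) ^ 2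

/-- Squared norm of the `r`'th row of the weight matrix at node `ν` of `T`. -/
noncomputable def rowSq (R : MTree N → ℕ) (W : ∀ ν : MTree N, Fin (R ν) → ℕ → ℝ)
    (T ν : MTree N) (r : ℕ) : ℝ :=
  ∑ j : Fin (Rpar R T ν), (went R W ν r (j : ℕ)) ^ 2

/-- `σ^(ν,r)` : the norm of the `(ν,r)`'th local component, i.e. the product of the
norms of the vectors in `LC(ν,r)` (the `r`'th row of `W^(ν)` together with the `r`'th
columns of the weight matrices of the children of `ν`). -/
noncomputable def sigmaLoc (R : MTree N → ℕ) (W : ∀ ν : MTree N, Fin (R ν) → ℕ → ℝ)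
    (T ν : MTree N) (r : ℕ) : ℝ :=
  Real.sqrt (rowSq R W T ν r) * (ν.children.map fun c => Real.sqrt (colSq R W c r)).prod

/-- `PadR_r(W^(ν)_{r,:})` : the matrix whose `r`'th row is the `r`'th row of `W^(ν)`
and whose other rows are zero. -/
noncomputable def padRow (R : MTree N → ℕ) (W : ∀ ν : MTree N, Fin (R ν) → ℕ → ℝ)
    (ν : MTree N) (r : ℕ) : Fin (R ν) → ℕ → ℝ :=
  fun i j => if (i : ℕ) = r then W ν i j else 0

/-- `PadC_r(W^(c)_{:,r})` : the matrix whose `r`'th column is the `r`'th column of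
`W^(c)` and whose other columns are zero. -/
noncomputable def padCol (R : MTree N → ℕ) (W : ∀ ν : MTree N, Fin (R ν) → ℕ → ℝ)
    (c : MTree N) (r : ℕ) : Fin (R c) → ℕ → ℝ :=
  fun i j => if j = r then W c i r else 0

/-- `Ĉ^(ν,r)` : the end tensor obtained by normalizing the `r`'th local component at
`ν` and setting all other local components at `ν` to zero, i.e. the end tensor computed
with `W^(ν)` replaced by `σ^{-1} · PadR_r(W^(ν)_{r,:})` (and `0` if `σ^(ν,r) = 0`). -/
noncomputable def hatC (R : MTree N → ℕ) (W : ∀ ν : MTree N, Fin (R ν) → ℕ → ℝ)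
    (T ν : MTree N) (r : ℕ) : Idx D → ℝ :=
  if sigmaLoc R W T ν r = 0 then 0
  else endT D R (replace R W ν fun i j =>
    if (i : ℕ) = r then (sigmaLoc R W T ν r)⁻¹ * W ν i j else 0) T

/-- The objective `φ_H = L_H ∘ (end tensor)`. -/
noncomputable def obj (L : (Idx D → ℝ) → ℝ) (R : MTree N → ℕ) (T : MTree N)
    (W : ∀ ν : MTree N, Fin (R ν) → ℕ → ℝ) : ℝ :=
  L (endT D R W T)

/-- Update the single entry `(i, j)` of the weight matrix at node `μ` to the value `s`. -/
noncomputable def upd (R : MTree N → ℕ) (W : ∀ ν : MTree N, Fin (R ν) → ℕ → ℝ)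
    (μ : MTree N) (i j : ℕ) (s : ℝ) : ∀ ν : MTree N, Fin (R ν) → ℕ → ℝ :=
  fun ν i' j' => if ν = μ ∧ (i' : ℕ) = i ∧ j' = j then s else W ν i' j'

/-- `∂φ_H/∂W^(μ)_{i,j}` : the partial derivative of the objective with respect to the
`(i,j)` entry of the weight matrix at node `μ`, at the point `W`. -/
noncomputable def dObj (L : (Idx D → ℝ) → ℝ) (R : MTree N → ℕ) (T : MTree N)
    (W : ∀ ν : MTree N, Fin (R ν) → ℕ → ℝ) (μ : MTree N) (i j : ℕ) : ℝ :=
  deriv (fun s : ℝ => obj D L R T (upd R W μ i j s)) (went R W μ i j)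

/-- `∇L(A)` : the gradient of a loss over tensors, entrywise. -/
noncomputable def tgrad (L : (Idx D → ℝ) → ℝ) (A : Idx D → ℝ) : Idx D → ℝ :=
  fun x => deriv (fun s : ℝ => L (Function.update A x s)) (A x)

/-- Local smoothness of the loss: its gradient is Lipschitz on compact sets. -/
def LocSmooth (L : (Idx D → ℝ) → ℝ) : Prop :=
  ∀ K : Set (Idx D → ℝ), IsCompact K → ∃ β : NNReal, LipschitzOnWith β (tgrad D L) K

/-- Gradient flow over the objective: each entry of each weight matrix moves against
its partial derivative. -/
def GradFlow (L : (Idx D → ℝ) → ℝ) (R : MTree N → ℕ) (T : MTree N)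
    (Wt : ℝ → ∀ ν : MTree N, Fin (R ν) → ℕ → ℝ) : Prop :=
  ∀ (ν : MTree N) (i : Fin (R ν)) (j : ℕ) (t : ℝ), 0 ≤ t →
    HasDerivAt (fun s : ℝ => Wt s ν i j) (- dObj D L R T (Wt t) ν (i : ℕ) j) t

/-- The matricization of an order-`N` tensor according to the index set `I` : the
matrix whose rows are indexed by the modes in `I` and whose columns are indexed by the
remaining modes. -/
noncomputable def matricize (I : Finset (Fin N)) (A : Idx D → ℝ) :
    Matrix (∀ i : {n // n ∈ I}, Fin (D i)) (∀ j : {n // n ∉ I}, Fin (D j)) ℝ :=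
  fun ρ κ => A fun n => if h : n ∈ I then ρ ⟨n, h⟩ else κ ⟨n, h⟩

/-- Frobenius norm of the weight matrix `W^(ν) ∈ ℝ^{R_ν × R_{Pa(ν)}}` at node `ν` of `T`. -/
noncomputable def wFro (R : MTree N → ℕ) (W : ∀ ν : MTree N, Fin (R ν) → ℕ → ℝ)
    (T ν : MTree N) : ℝ :=
  Real.sqrt (∑ i : Fin (R ν), ∑ j : Fin (Rpar R T ν), (W ν i (j : ℕ)) ^ 2)

/-- The weights obtained by pruning the `(ν,r)`'th local component: the `r`'th row of
`W^(ν)` and the `r`'th column of `W^(c)` for every child `c` of `ν` are set to zero. -/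
noncomputable def pruneLC (R : MTree N → ℕ) (W : ∀ ν : MTree N, Fin (R ν) → ℕ → ℝ)
    (ν : MTree N) (r : ℕ) : ∀ μ : MTree N, Fin (R μ) → ℕ → ℝ :=
  fun μ i j =>
    if μ = ν ∧ (i : ℕ) = r then 0
    else if μ ∈ ν.children ∧ j = r then 0
    else W μ i j


namespace MTree
variable {N : ℕ}

theorem aux_leafList_node (ts : List (MTree N)) :
    (MTree.node ts).leafList = ts.flatMap leafList := by
  rw [leafList, List.flatMap, List.flatMap, List.attach_map_val]
theorem aux_nodes_node (ts : List (MTree N)) :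
    (MTree.node ts).nodes = .node ts :: ts.flatMap nodes := by
  rw [nodes, List.flatMap, List.flatMap, List.attach_map_val]
theorem aux_branching_node (ts : List (MTree N)) :
    (MTree.node ts).Branching ↔ ts ≠ [] ∧ ∀ t ∈ ts, Branching t := by
  rw [Branching]
  simp only [List.mem_attach, true_implies]
  exact ⟨fun ⟨h1, h2⟩ => ⟨h1, fun t ht => h2 ⟨t, ht⟩⟩, fun ⟨h1, h2⟩ => ⟨h1, fun t => h2 t.1 t.2⟩⟩
theorem aux_mem_nodes_self (t : MTree N) : t ∈ t.nodes := by
  cases t with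
  | leaf i => rw [nodes]; exact List.mem_singleton.2 rfl
  | node ts => rw [aux_nodes_node]; exact List.mem_cons_self

theorem aux_sizeOf_lt_of_mem {t : MTree N} {ts : List (MTree N)} (h : t ∈ ts) :
    sizeOf t < sizeOf (MTree.node ts) := by
  have := List.sizeOf_lt_of_mem h
  simp only [MTree.node.sizeOf_spec]; omega

theorem aux_mem_nodes_cases {μ : MTree N} : ∀ {t : MTree N}, μ ∈ t.nodes →
    μ = t ∨ sizeOf μ < sizeOf t := by
  intro t
  induction t using MTree.nodes.induct with
  | case1 i => rw [nodes]; intro h; left; exact List.mem_singleton.1 h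
  | case2 ts ih =>
      rw [aux_nodes_node]; intro h
      rcases List.mem_cons.1 h with h | h
      · exact Or.inl h
      · right
        obtain ⟨t', ht', hμ⟩ := List.mem_flatMap.1 h
        have h2 := aux_sizeOf_lt_of_mem ht'
        have hr : sizeOf (⟨t', ht'⟩ : {x // x ∈ ts}).1 = sizeOf t' := rfl
        rcases ih ⟨t', ht'⟩ hμ with heq | hlt
        · rw [heq]; exact h2
        · rw [hr] at hlt; omega

theorem aux_mem_nodes_child {t : MTree N} {ts : List (MTree N)} (h : t ∈ ts) :
    t ∈ (MTree.node ts).nodes := by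
  rw [aux_nodes_node]
  exact List.mem_cons_of_mem _ (List.mem_flatMap.2 ⟨t, h, aux_mem_nodes_self t⟩)

theorem aux_nodes_trans : ∀ {τ : MTree N} {t μ : MTree N}, μ ∈ t.nodes → t ∈ τ.nodes →
    μ ∈ τ.nodes := by
  intro τ
  induction τ using MTree.nodes.induct with
  | case1 i =>
      intro t μ h1 h2
      rw [nodes] at h2 ⊢
      rw [List.mem_singleton.1 h2, nodes] at h1; exact h1
  | case2 ts ih =>
      intro t μ h1 h2
      rw [aux_nodes_node] at h2 ⊢
      rcases List.mem_cons.1 h2 with rfl | h2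
      · rw [← aux_nodes_node]; exact h1
      · obtain ⟨t', ht', hmem⟩ := List.mem_flatMap.1 h2
        exact List.mem_cons_of_mem _
          (List.mem_flatMap.2 ⟨t', ht', ih ⟨t', ht'⟩ h1 hmem⟩)

theorem aux_leaf_subset : ∀ {t μ : MTree N}, μ ∈ t.nodes → ∀ i ∈ μ.leafList, i ∈ t.leafList := by
  intro t
  induction t using MTree.nodes.induct with
  | case1 j =>
      intro μ h i hi
      rw [nodes] at h; rw [List.mem_singleton.1 h] at hi; exact hi
  | case2 ts ih =>
      intro μ h i hi
      rw [aux_nodes_node] at h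
      rcases List.mem_cons.1 h with rfl | h
      · exact hi
      · obtain ⟨t', ht', hmem⟩ := List.mem_flatMap.1 h
        rw [aux_leafList_node]
        exact List.mem_flatMap.2 ⟨t', ht', ih ⟨t', ht'⟩ hmem i hi⟩

theorem aux_leafList_ne_nil : ∀ {t : MTree N}, t.Branching → t.leafList ≠ [] := by
  intro t
  induction t using MTree.nodes.induct with
  | case1 i => intro _; rw [leafList]; simp
  | case2 ts ih =>
      intro hb
      rw [aux_branching_node] at hb
      rw [aux_leafList_node]
      obtain ⟨t, ht⟩ := List.exists_mem_of_ne_nil _ hb.1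
      intro hnil
      exact ih ⟨t, ht⟩ (hb.2 t ht)
        (List.eq_nil_of_subset_nil (fun x hx => hnil ▸ List.mem_flatMap.2 ⟨t, ht, hx⟩))

theorem aux_branching_of_mem : ∀ {t μ : MTree N}, μ ∈ t.nodes → t.Branching → μ.Branching := by
  intro t
  induction t using MTree.nodes.induct with
  | case1 j => intro μ h _; rw [nodes] at h; rw [List.mem_singleton.1 h]; trivial
  | case2 ts ih =>
      intro μ h hb
      rw [aux_nodes_node] at h
      rcases List.mem_cons.1 h with rfl | h
      · exact hb
      · obtain ⟨t', ht', hmem⟩ := List.mem_flatMap.1 h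
        exact ih ⟨t', ht'⟩ hmem ((aux_branching_node ts).1 hb |>.2 t' ht')

theorem aux_nodup_child {ts : List (MTree N)} (hnd : (MTree.node ts).leafList.Nodup)
    {t : MTree N} (ht : t ∈ ts) : t.leafList.Nodup := by
  rw [aux_leafList_node, List.nodup_flatMap] at hnd
  exact hnd.1 t ht

theorem aux_nodup_of_mem : ∀ {t μ : MTree N}, μ ∈ t.nodes → t.leafList.Nodup →
    μ.leafList.Nodup := by
  intro t
  induction t using MTree.nodes.induct with
  | case1 j => intro μ h hnd; rw [nodes] at h; rw [List.mem_singleton.1 h]; exact hnd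
  | case2 ts ih =>
      intro μ h hnd
      rw [aux_nodes_node] at h
      rcases List.mem_cons.1 h with rfl | h
      · exact hnd
      · obtain ⟨t', ht', hmem⟩ := List.mem_flatMap.1 h
        exact ih ⟨t', ht'⟩ hmem (aux_nodup_child hnd ht')

theorem aux_pairwise_leaf_disj {ts : List (MTree N)} (hnd : (MTree.node ts).leafList.Nodup) :
    ts.Pairwise (fun a b => ∀ x, x ∈ a.leafList → x ∈ b.leafList → False) := by
  rw [aux_leafList_node, List.nodup_flatMap] at hnd
  exact hnd.2.imp (fun hd x h1 h2 => hd h1 h2)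

theorem aux_ts_nodup {ts : List (MTree N)} (hnd : (MTree.node ts).leafList.Nodup)
    (hb : (MTree.node ts).Branching) : ts.Nodup := by
  have hp := aux_pairwise_leaf_disj hnd
  refine hp.imp_of_mem ?_
  intro a b ha hb' hd heq
  obtain ⟨x, hx⟩ := List.exists_mem_of_ne_nil _
    (aux_leafList_ne_nil ((aux_branching_node ts).1 hb |>.2 a ha))
  exact hd x hx (heq ▸ hx)

/-- distinct children have disjoint node sets -/
theorem aux_disj_nodes {ts : List (MTree N)} (hnd : (MTree.node ts).leafList.Nodup)
    (hb : (MTree.node ts).Branching) {t t' μ : MTree N} (ht : t ∈ ts) (ht' : t' ∈ ts)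
    (hne : t ≠ t') (h1 : μ ∈ t.nodes) (h2 : μ ∈ t'.nodes) : False := by
  have hp := aux_pairwise_leaf_disj hnd
  have hsymm : Symmetric (fun a b : MTree N => ∀ x, x ∈ a.leafList → x ∈ b.leafList → False) :=
    fun a b h x hx hy => h x hy hx
  have := (haveI : Std.Symm (fun a b : MTree N => ∀ x, x ∈ a.leafList → x ∈ b.leafList → False) := ⟨hsymm⟩; hp.forall ht ht' hne)
  obtain ⟨x, hx⟩ := List.exists_mem_of_ne_nil _
    (aux_leafList_ne_nil (aux_branching_of_mem h1 ((aux_branching_node ts).1 hb |>.2 t ht)))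
  exact this x (aux_leaf_subset h1 x hx) (aux_leaf_subset h2 x hx)


end MTree

section Aux
open MTree
variable {N : ℕ} {D : Fin N → ℕ} {R : MTree N → ℕ} {W : ∀ ν : MTree N, Fin (R ν) → ℕ → ℝ}

theorem aux_interm_node (ts : List (MTree N)) (r : ℕ) (x : Idx D) :
    interm D R W (.node ts) r x
      = ∑ r' : Fin (R (.node ts)),
          W (.node ts) r' r * (ts.map fun t => interm D R W t (r' : ℕ) x).prod := by
  rw [interm]
  refine Finset.sum_congr rfl fun r' _ => ?_
  rw [List.attach_map_val (l := ts) (f := fun t => interm D R W t (r' : ℕ) x)]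

theorem aux_interm_leaf (i : Fin N) (r : ℕ) (x : Idx D) :
    interm D R W (.leaf i) r x
      = if h : R (.leaf i) = D i then W (.leaf i) (Fin.cast h.symm (x i)) r else 0 := by
  rw [interm]

theorem aux_replace_ne {μ ν : MTree N} (A : Fin (R μ) → ℕ → ℝ) (h : ν ≠ μ) :
    replace R W μ A ν = W ν := dif_neg h

theorem aux_replace_self (μ : MTree N) (A : Fin (R μ) → ℕ → ℝ) :
    replace R W μ A μ = A := by
  show dite _ _ _ = A
  rw [dif_pos rfl]
  rfl

theorem aux_replace_W (μ : MTree N) : replace R W μ (W μ) = W := by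
  funext ν
  by_cases h : ν = μ
  · subst h; exact aux_replace_self ν (W ν)
  · exact aux_replace_ne _ h

/-- interm does not depend on weights outside the subtree -/
theorem aux_interm_congr : ∀ {t : MTree N},
    ∀ {W₁ W₂ : ∀ ν : MTree N, Fin (R ν) → ℕ → ℝ},
    (∀ μ ∈ t.nodes, W₁ μ = W₂ μ) → ∀ r x, interm D R W₁ t r x = interm D R W₂ t r x := by
  intro t
  induction t using MTree.nodes.induct with
  | case1 i =>
      intro W₁ W₂ hW r x
      rw [aux_interm_leaf, aux_interm_leaf, hW _ (aux_mem_nodes_self _)]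
  | case2 ts ih =>
      intro W₁ W₂ hW r x
      rw [aux_interm_node, aux_interm_node, hW _ (aux_mem_nodes_self _)]
      refine Finset.sum_congr rfl fun r' _ => ?_
      congr 1
      congr 1
      refine List.map_congr_left fun t ht => ?_
      exact ih ⟨t, ht⟩ (fun μ hμ => hW μ (aux_nodes_trans hμ (aux_mem_nodes_child ht))) _ x

theorem aux_interm_replace_notmem {μ : MTree N} (A : Fin (R μ) → ℕ → ℝ) {t : MTree N}
    (h : μ ∉ t.nodes) (r : ℕ) (x : Idx D) :
    interm D R (replace R W μ A) t r x = interm D R W t r x :=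
  aux_interm_congr (fun ν hν => aux_replace_ne A (fun he => h (he ▸ hν))) r x

theorem aux_list_lin {α : Type*} (a : ℝ) (f f₁ f₂ : α → ℝ) (P : α → Prop) :
    ∀ (l : List α), l.Nodup → (∀ b ∈ l, ¬ P b → f b = f₁ b ∧ f b = f₂ b) →
    (∀ b ∈ l, P b → f b = a * f₁ b + f₂ b) →
    (∀ b ∈ l, ∀ b' ∈ l, P b → P b' → b = b') →
    (∃ b ∈ l, P b) →
    (l.map f).prod = a * (l.map f₁).prod + (l.map f₂).prod := by
  intro l
  induction l with
  | nil => rintro _ _ _ _ ⟨b, hb, _⟩; exact absurd hb (List.not_mem_nil)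
  | cons b l ih =>
      intro hnd h1 h2 h3 h4
      by_cases hPb : P b
      · have hnotl : ∀ b' ∈ l, ¬ P b' := by
          intro b' hb' hPb'
          have := h3 b (List.mem_cons_self) b' (List.mem_cons_of_mem _ hb') hPb hPb'
          exact (List.nodup_cons.1 hnd).1 (this ▸ hb')
        have e1 : (l.map f).prod = (l.map f₁).prod := by
          congr 1; exact List.map_congr_left fun c hc => (h1 c (List.mem_cons_of_mem _ hc) (hnotl c hc)).1
        have e2 : (l.map f).prod = (l.map f₂).prod := by
          congr 1; exact List.map_congr_left fun c hc => (h1 c (List.mem_cons_of_mem _ hc) (hnotl c hc)).2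
        simp only [List.map_cons, List.prod_cons]
        rw [h2 b (List.mem_cons_self) hPb, ← e1, ← e2]
        ring
      · obtain ⟨b', hb', hPb'⟩ := h4
        have hb'l : b' ∈ l := by
          rcases List.mem_cons.1 hb' with rfl | h
          · exact absurd hPb' hPb
          · exact h
        have heq := h1 b (List.mem_cons_self) hPb
        simp only [List.map_cons, List.prod_cons]
        rw [ih (List.nodup_cons.1 hnd).2
            (fun c hc => h1 c (List.mem_cons_of_mem _ hc))
            (fun c hc => h2 c (List.mem_cons_of_mem _ hc))
            (fun c hc c' hc' => h3 c (List.mem_cons_of_mem _ hc) c' (List.mem_cons_of_mem _ hc'))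
            ⟨b', hb'l, hPb'⟩, heq.1, heq.2.symm.trans heq.1]
        ring

theorem aux_not_mem_nodes_of_child {μ : MTree N} {ts : List (MTree N)} {t : MTree N}
    (ht : t ∈ ts) (hs : sizeOf (MTree.node ts) ≤ sizeOf μ) : μ ∉ t.nodes := by
  intro h
  have hlt := aux_sizeOf_lt_of_mem ht
  rcases aux_mem_nodes_cases h with rfl | hlt2 <;> omega

theorem aux_interm_lin {μ : MTree N} (a : ℝ) (A B : Fin (R μ) → ℕ → ℝ) :
    ∀ {t : MTree N}, t.leafList.Nodup → t.Branching → μ ∈ t.nodes → ∀ r x,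
    interm D R (replace R W μ (fun i j => a * A i j + B i j)) t r x
      = a * interm D R (replace R W μ A) t r x + interm D R (replace R W μ B) t r x := by
  intro t
  induction t using MTree.nodes.induct with
  | case1 i =>
      intro hnd hb hμ r x
      rw [nodes] at hμ
      have hμi := List.mem_singleton.1 hμ
      subst hμi
      rw [aux_interm_leaf, aux_interm_leaf, aux_interm_leaf,
        aux_replace_self, aux_replace_self, aux_replace_self]
      split
      · rfl
      · ring
  | case2 ts ih =>
      intro hnd hb hμ r x
      rw [aux_interm_node, aux_interm_node, aux_interm_node]
      by_cases hμts : μ = MTree.node ts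
      · subst hμts
        have hch : ∀ t ∈ ts, ∀ (A' : Fin (R (MTree.node ts)) → ℕ → ℝ) (r' : ℕ),
            interm D R (replace R W (MTree.node ts) A') t r' x = interm D R W t r' x := by
          intro t ht A' r'
          exact aux_interm_replace_notmem A' (aux_not_mem_nodes_of_child ht le_rfl) r' x
        rw [aux_replace_self, aux_replace_self, aux_replace_self,
          Finset.mul_sum, ← Finset.sum_add_distrib]
        refine Finset.sum_congr rfl fun r' _ => ?_
        have e1 : (ts.map fun t => interm D R (replace R W (MTree.node ts) fun i j => a * A i j + B i j) t (r' : ℕ) x)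
            = ts.map fun t => interm D R W t (r' : ℕ) x :=
          List.map_congr_left fun t ht => hch t ht _ _
        have e2 : (ts.map fun t => interm D R (replace R W (MTree.node ts) A) t (r' : ℕ) x)
            = ts.map fun t => interm D R W t (r' : ℕ) x :=
          List.map_congr_left fun t ht => hch t ht _ _
        have e3 : (ts.map fun t => interm D R (replace R W (MTree.node ts) B) t (r' : ℕ) x)
            = ts.map fun t => interm D R W t (r' : ℕ) x :=
          List.map_congr_left fun t ht => hch t ht _ _
        rw [e1, e2, e3]
        ring
      · have hμt : ∃ t₀ ∈ ts, μ ∈ t₀.nodes := by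
          rw [aux_nodes_node] at hμ
          rcases List.mem_cons.1 hμ with h | h
          · exact absurd h hμts
          · exact List.mem_flatMap.1 h
        obtain ⟨t₀, ht₀, hμt₀⟩ := hμt
        have hne : MTree.node ts ≠ μ := by
          intro h; exact hμts h.symm
        rw [aux_replace_ne _ hne, aux_replace_ne _ hne, aux_replace_ne _ hne,
          Finset.mul_sum, ← Finset.sum_add_distrib]
        refine Finset.sum_congr rfl fun r' _ => ?_
        have := aux_list_lin a
          (fun t => interm D R (replace R W μ fun i j => a * A i j + B i j) t (r' : ℕ) x)
          (fun t => interm D R (replace R W μ A) t (r' : ℕ) x)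
          (fun t => interm D R (replace R W μ B) t (r' : ℕ) x)
          (fun t => μ ∈ t.nodes) ts (aux_ts_nodup hnd hb)
          (fun t ht hP => ⟨(aux_interm_replace_notmem _ hP _ x).trans
              (aux_interm_replace_notmem _ hP _ x).symm,
            (aux_interm_replace_notmem _ hP _ x).trans
              (aux_interm_replace_notmem _ hP _ x).symm⟩)
          (fun t ht hP => ih ⟨t, ht⟩ (aux_nodup_child hnd ht)
            ((aux_branching_node ts).1 hb |>.2 t ht) hP (r' : ℕ) x)
          (fun t ht t' ht' hP hP' => by
            by_contra hne'
            exact aux_disj_nodes hnd hb ht ht' hne' hP hP')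
          ⟨t₀, ht₀, hμt₀⟩
        rw [this]
        ring

theorem aux_interm_zero {μ : MTree N} {t : MTree N} (hnd : t.leafList.Nodup) (hb : t.Branching)
    (hμ : μ ∈ t.nodes) (r : ℕ) (x : Idx D) :
    interm D R (replace R W μ (fun _ _ => 0)) t r x = 0 := by
  have h := aux_interm_lin (R := R) (W := W) 1 (fun _ _ => (0:ℝ)) (fun _ _ => (0:ℝ)) hnd hb hμ r x
  have e : (fun (_ : Fin (R μ)) (_ : ℕ) => (1:ℝ) * 0 + 0) = (fun (_ : Fin (R μ)) (_ : ℕ) => (0:ℝ)) := by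
    funext i j; ring
  rw [e] at h
  linarith

theorem aux_interm_sum {μ : MTree N} {κ : Type} (s : Finset κ) (c : κ → ℝ)
    (M : κ → Fin (R μ) → ℕ → ℝ) {t : MTree N} (hnd : t.leafList.Nodup) (hb : t.Branching)
    (hμ : μ ∈ t.nodes) (r : ℕ) (x : Idx D) :
    interm D R (replace R W μ (fun i j => ∑ k ∈ s, c k * M k i j)) t r x
      = ∑ k ∈ s, c k * interm D R (replace R W μ (M k)) t r x := by
  classical
  induction s using Finset.induction_on with
  | empty =>
      simp only [Finset.sum_empty]
      exact aux_interm_zero hnd hb hμ r x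
  | @insert a s ha ih =>
      have e : (fun (i : Fin (R μ)) (j : ℕ) => ∑ k ∈ insert a s, c k * M k i j)
          = fun i j => c a * M a i j + (fun i j => ∑ k ∈ s, c k * M k i j) i j := by
        funext i j; rw [Finset.sum_insert ha]
      rw [e, aux_interm_lin (c a) (M a) _ hnd hb hμ r x, ih, Finset.sum_insert ha]

theorem aux_findSome_unique {α β : Type*} (f : α → Option β) (a₀ : α) (v : β) :
    ∀ (l : List α), a₀ ∈ l → f a₀ = some v → (∀ a ∈ l, a = a₀ ∨ f a = none) →
    l.findSome? f = some v := by
  intro l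
  induction l with
  | nil => intro h; exact absurd h (List.not_mem_nil)
  | cons b l ih =>
      intro h₀ hv hothers
      rcases hothers b (List.mem_cons_self) with rfl | hb
      · rw [List.findSome?_cons, hv]
      · rw [List.findSome?_cons, hb]
        refine ih ?_ hv (fun a ha => hothers a (List.mem_cons_of_mem _ ha))
        rcases List.mem_cons.1 h₀ with rfl | h
        · rw [hv] at hb; exact absurd hb (by simp)
        · exact h

theorem aux_parentIn_none : ∀ {t ν : MTree N}, ν ∉ t.nodes → parentIn t ν = none := by
  intro t
  induction t using MTree.nodes.induct with
  | case1 i => intro ν h; rw [parentIn]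
  | case2 ts ih =>
      intro ν h
      rw [parentIn, if_neg, List.findSome?_eq_none_iff]
      · intro t ht
        exact ih t (fun hmem => h (aux_nodes_trans hmem (aux_mem_nodes_child t.2)))
      · exact fun hts => h (aux_mem_nodes_child hts)

theorem aux_parentIn_eq : ∀ {T₀ : MTree N}, T₀.leafList.Nodup → T₀.Branching →
    ∀ {ss : List (MTree N)} {ν : MTree N}, MTree.node ss ∈ T₀.nodes → ν ∈ ss →
    parentIn T₀ ν = some (MTree.node ss) := by
  intro T₀
  induction T₀ using MTree.nodes.induct with
  | case1 i =>
      intro _ _ ss ν hss hν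
      rw [nodes] at hss
      exact absurd (List.mem_singleton.1 hss) (by simp)
  | case2 ts ih =>
      intro hnd hb ss ν hss hν
      have hνss : ν ∈ (MTree.node ss).nodes := aux_mem_nodes_child hν
      have hsz : sizeOf ν < sizeOf (MTree.node ss) := aux_sizeOf_lt_of_mem hν
      rw [parentIn]
      by_cases h : ν ∈ ts
      · rw [if_pos h]
        rcases List.mem_cons.1 ((aux_nodes_node ts) ▸ hss) with heq | hmem
        · rw [heq]
        · exfalso
          obtain ⟨t, ht, hsst⟩ := List.mem_flatMap.1 hmem
          have hνt : ν ∈ t.nodes := aux_nodes_trans hνss hsst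
          by_cases hteq : t = ν
          · subst hteq
            rcases aux_mem_nodes_cases hsst with heq2 | hlt
            · rw [heq2] at hsz; omega
            · have := aux_mem_nodes_cases hνss
              omega
          · exact aux_disj_nodes hnd hb ht h hteq hνt (aux_mem_nodes_self ν)
      · rw [if_neg h]
        have hssne : MTree.node ss ≠ MTree.node ts := by
          intro heq
          rw [MTree.node.injEq] at heq
          exact h (heq ▸ hν)
        have hmem : ∃ t₁ ∈ ts, MTree.node ss ∈ t₁.nodes := by
          rcases List.mem_cons.1 ((aux_nodes_node ts) ▸ hss) with heq | hmem
          · exact absurd heq hssne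
          · exact List.mem_flatMap.1 hmem
        obtain ⟨t₁, ht₁, hsst₁⟩ := hmem
        have hνt₁ : ν ∈ t₁.nodes := aux_nodes_trans hνss hsst₁
        refine aux_findSome_unique _ (⟨t₁, ht₁⟩ : {x // x ∈ ts}) _ ts.attach
          (List.mem_attach _ _)
          (ih ⟨t₁, ht₁⟩ (aux_nodup_child hnd ht₁) ((aux_branching_node ts).1 hb |>.2 t₁ ht₁)
            hsst₁ hν) ?_
        intro a _
        by_cases hat : a.1 = t₁
        · exact Or.inl (Subtype.ext hat)
        · refine Or.inr (aux_parentIn_none ?_)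
          intro hνa
          exact aux_disj_nodes hnd hb a.2 ht₁ hat hνa hνt₁

theorem aux_Rpar_root (Tb : MTree N) : Rpar R Tb Tb = 1 := by
  rw [Rpar, if_pos rfl]

theorem aux_Rpar_eq {Tb : MTree N} (hnd : Tb.leafList.Nodup) (hb : Tb.Branching)
    {ss : List (MTree N)} {ν : MTree N} (hss : MTree.node ss ∈ Tb.nodes) (hν : ν ∈ ss) :
    Rpar R Tb ν = R (MTree.node ss) := by
  have hνTb : ν ≠ Tb := by
    intro heq
    subst heq
    have h2 := aux_mem_nodes_cases hss
    have h3 := aux_sizeOf_lt_of_mem hν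
    rcases h2 with heq2 | hlt
    · rw [heq2] at h3; omega
    · omega
  rw [Rpar, if_neg hνTb, aux_parentIn_eq hnd hb hss hν]
  rfl

theorem aux_interm_dep {ν : MTree N} {A A' : Fin (R ν) → ℕ → ℝ} {Tb : MTree N}
    (hndb : Tb.leafList.Nodup) (hbb : Tb.Branching)
    (hA : ∀ (i : Fin (R ν)) (j : ℕ), j < Rpar R Tb ν → A i j = A' i j) :
    ∀ {t : MTree N}, t ∈ Tb.nodes → ν ∈ t.nodes → ∀ q x, (t = ν → q < Rpar R Tb ν) →
    interm D R (replace R W ν A) t q x = interm D R (replace R W ν A') t q x := by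
  intro t
  induction t using MTree.nodes.induct with
  | case1 i =>
      intro htb hν q x hq
      have hν' : ν = MTree.leaf i := by rw [nodes] at hν; exact List.mem_singleton.1 hν
      subst hν'
      rw [aux_interm_leaf, aux_interm_leaf, aux_replace_self, aux_replace_self]
      have hq' := hq rfl
      split
      · rw [hA _ _ hq']
      · rfl
  | case2 ts ih =>
      intro htb hν q x hq
      have hnd := aux_nodup_of_mem htb hndb
      have hb := aux_branching_of_mem htb hbb
      rw [aux_interm_node, aux_interm_node]
      by_cases hteq : MTree.node ts = ν
      · subst hteq
        refine Finset.sum_congr rfl fun r' _ => ?_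
        rw [aux_replace_self, aux_replace_self, hA _ _ (hq rfl)]
        congr 2
        refine List.map_congr_left fun t ht => ?_
        rw [aux_interm_replace_notmem _ (aux_not_mem_nodes_of_child ht le_rfl),
          aux_interm_replace_notmem _ (aux_not_mem_nodes_of_child ht le_rfl)]
      · have hν' : ∃ t₀ ∈ ts, ν ∈ t₀.nodes := by
          rcases List.mem_cons.1 ((aux_nodes_node ts) ▸ hν) with heq | hmem
          · exact absurd heq.symm hteq
          · exact List.mem_flatMap.1 hmem
        obtain ⟨t₀, ht₀, hνt₀⟩ := hν'
        rw [aux_replace_ne _ hteq, aux_replace_ne _ hteq]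
        refine Finset.sum_congr rfl fun r' _ => ?_
        congr 2
        refine List.map_congr_left fun t ht => ?_
        by_cases htt : t = t₀
        · subst htt
          refine ih ⟨t, ht⟩ (aux_nodes_trans (aux_mem_nodes_child ht) htb) hνt₀ _ x ?_
          intro hteq2
          subst hteq2
          rw [aux_Rpar_eq hndb hbb htb ht]
          exact r'.isLt
        · rw [aux_interm_replace_notmem _ (fun h => aux_disj_nodes hnd hb ht ht₀ htt h hνt₀),
            aux_interm_replace_notmem _ (fun h => aux_disj_nodes hnd hb ht ht₀ htt h hνt₀)]

theorem aux_interm_loc {ν : MTree N} {W₁ W₂ : ∀ μ : MTree N, Fin (R μ) → ℕ → ℝ}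
    (hloc : ∀ q x, interm D R W₁ ν q x = interm D R W₂ ν q x)
    (hout : ∀ μ : MTree N, μ ∉ ν.nodes → W₁ μ = W₂ μ) :
    ∀ {t : MTree N}, t.leafList.Nodup → t.Branching →
      (ν ∈ t.nodes ∨ ∀ μ ∈ t.nodes, μ ∉ ν.nodes) → ∀ q x,
      interm D R W₁ t q x = interm D R W₂ t q x := by
  intro t
  induction t using MTree.nodes.induct with
  | case1 i =>
      intro hnd hb halt q x
      rcases halt with h | h
      · rw [nodes] at h
        have : ν = MTree.leaf i := List.mem_singleton.1 h
        subst this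
        exact hloc q x
      · rw [aux_interm_leaf, aux_interm_leaf,
          hout _ (h _ (aux_mem_nodes_self _))]
  | case2 ts ih =>
      intro hnd hb halt q x
      by_cases hteq : MTree.node ts = ν
      · subst hteq; exact hloc q x
      · have hmat : W₁ (MTree.node ts) = W₂ (MTree.node ts) := by
          refine hout _ ?_
          intro hmem
          rcases halt with h | h
          · -- ν ∈ nodes (node ts) and node ts ∈ nodes ν
            rcases aux_mem_nodes_cases hmem with heq | hlt1
            · exact hteq heq
            · rcases aux_mem_nodes_cases h with heq | hlt2
              · exact hteq heq.symm
              · omega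
          · exact h _ (aux_mem_nodes_self _) hmem
        rw [aux_interm_node, aux_interm_node, hmat]
        refine Finset.sum_congr rfl fun r' _ => ?_
        congr 2
        refine List.map_congr_left fun t ht => ?_
        rcases halt with h | h
        · have hν' : ∃ t₀ ∈ ts, ν ∈ t₀.nodes := by
            rcases List.mem_cons.1 ((aux_nodes_node ts) ▸ h) with heq | hmem
            · exact absurd heq.symm hteq
            · exact List.mem_flatMap.1 hmem
          obtain ⟨t₀, ht₀, hνt₀⟩ := hν'
          by_cases htt : t = t₀
          · subst htt
            exact ih ⟨t, ht⟩ (aux_nodup_child hnd ht)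
              ((aux_branching_node ts).1 hb |>.2 t ht) (Or.inl hνt₀) _ x
          · refine ih ⟨t, ht⟩ (aux_nodup_child hnd ht)
              ((aux_branching_node ts).1 hb |>.2 t ht) (Or.inr ?_) _ x
            intro μ hμt hμν
            exact aux_disj_nodes hnd hb ht ht₀ htt hμt (aux_nodes_trans hμν hνt₀)
        · refine ih ⟨t, ht⟩ (aux_nodup_child hnd ht)
            ((aux_branching_node ts).1 hb |>.2 t ht) (Or.inr ?_) _ x
          intro μ hμt
          exact h μ (aux_nodes_trans hμt (aux_mem_nodes_child ht))


theorem aux_interm_padRow {ts : List (MTree N)} (r : Fin (R (MTree.node ts))) (q : ℕ) (x : Idx D) :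
    interm D R (replace R W (MTree.node ts) (padRow R W (MTree.node ts) (r : ℕ))) (MTree.node ts) q x
      = W (MTree.node ts) r q * (ts.map fun t => interm D R W t (r : ℕ) x).prod := by
  rw [aux_interm_node]
  rw [Finset.sum_eq_single r]
  · rw [aux_replace_self]
    simp only [padRow, if_pos rfl]
    congr 2
    refine List.map_congr_left fun t ht => ?_
    exact aux_interm_replace_notmem _ (aux_not_mem_nodes_of_child ht le_rfl) _ x
  · intro r' _ hne
    rw [aux_replace_self]
    simp only [padRow]
    rw [if_neg (fun h => hne (Fin.ext h)), zero_mul]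
  · intro h; exact absurd (Finset.mem_univ r) h

theorem aux_interm_padCol_self {c : MTree N} (r : ℕ) (q : ℕ) (x : Idx D) :
    interm D R (replace R W c (padCol R W c r)) c q x
      = if q = r then interm D R W c r x else 0 := by
  cases c with
  | leaf i =>
      rw [aux_interm_leaf, aux_interm_leaf, aux_replace_self]
      simp only [padCol]
      by_cases hq : q = r
      · subst hq
        simp
      · simp only [if_neg hq]
        split <;> rfl
  | node ss =>
      by_cases hq : q = r
      · subst hq
        rw [if_pos rfl, aux_interm_node, aux_interm_node]
        refine Finset.sum_congr rfl fun i _ => ?_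
        rw [aux_replace_self]
        simp only [padCol, if_pos rfl]
        congr 2
        refine List.map_congr_left fun t ht => ?_
        exact aux_interm_replace_notmem _ (aux_not_mem_nodes_of_child ht le_rfl) _ x
      · rw [if_neg hq, aux_interm_node]
        refine Finset.sum_eq_zero fun i _ => ?_
        rw [aux_replace_self]
        simp only [padCol, if_neg hq, zero_mul]

theorem aux_interm_padCol {ts : List (MTree N)} (hnd : (MTree.node ts).leafList.Nodup)
    (hb : (MTree.node ts).Branching) (r : Fin (R (MTree.node ts))) {c : MTree N} (hc : c ∈ ts)
    (q : ℕ) (x : Idx D) :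
    interm D R (replace R W c (padCol R W c (r : ℕ))) (MTree.node ts) q x
      = W (MTree.node ts) r q * (ts.map fun t => interm D R W t (r : ℕ) x).prod := by
  have hνc : MTree.node ts ≠ c := by
    intro heq
    have := aux_sizeOf_lt_of_mem hc
    rw [← heq] at this; omega
  rw [aux_interm_node, aux_replace_ne _ hνc]
  rw [Finset.sum_eq_single r]
  · congr 2
    refine List.map_congr_left fun t ht => ?_
    by_cases htc : t = c
    · subst htc
      rw [aux_interm_padCol_self, if_pos rfl]
    · exact aux_interm_replace_notmem _
        (fun h => aux_disj_nodes hnd hb ht hc htc h (aux_mem_nodes_self c)) _ x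
  · intro r' _ hne
    have h0 : (0:ℝ) ∈ ts.map fun t =>
        interm D R (replace R W c (padCol R W c (r : ℕ))) t (r' : ℕ) x := by
      refine List.mem_map.2 ⟨c, hc, ?_⟩
      rw [aux_interm_padCol_self, if_neg (fun h => hne (Fin.ext h))]
    rw [List.prod_eq_zero h0, mul_zero]
  · intro h; exact absurd (Finset.mem_univ r) h

theorem aux_key {Tb : MTree N} (hnd : Tb.leafList.Nodup) (hbb : Tb.Branching)
    {ts : List (MTree N)} (hν : MTree.node ts ∈ Tb.nodes) (r : Fin (R (MTree.node ts)))
    {c : MTree N} (hc : c ∈ ts) (q : ℕ) (x : Idx D) :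
    interm D R (replace R W c (padCol R W c (r : ℕ))) Tb q x
      = interm D R (replace R W (MTree.node ts) (padRow R W (MTree.node ts) (r : ℕ))) Tb q x := by
  have hndν := aux_nodup_of_mem hν hnd
  have hbν := aux_branching_of_mem hν hbb
  refine aux_interm_loc (ν := MTree.node ts) ?_ ?_ hnd hbb (Or.inl hν) q x
  · intro q' x'
    rw [aux_interm_padCol hndν hbν r hc, aux_interm_padRow]
  · intro μ hμ
    have hμc : μ ≠ c := fun h => hμ (h ▸ aux_mem_nodes_child hc)
    have hμν : μ ≠ MTree.node ts := fun h => hμ (h ▸ aux_mem_nodes_self _)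
    rw [aux_replace_ne _ hμc, aux_replace_ne _ hμν]

theorem aux_tgrad_eq (L : (Idx D → ℝ) → ℝ) (hL : Differentiable ℝ L) (A : Idx D → ℝ)
    (x : Idx D) : tgrad D L A x = fderiv ℝ L A (Pi.single x 1) := by
  classical
  have hupd : ∀ s : ℝ, Function.update A x s = A + (s - A x) • (Pi.single x (1:ℝ) : Idx D → ℝ) := by
    intro s
    funext y
    by_cases hy : y = x
    · subst hy
      simp
    · simp [Function.update_of_ne hy, Pi.single_eq_of_ne hy]
  have hg : HasDerivAt (fun s : ℝ => A + (s - A x) • (Pi.single x (1:ℝ) : Idx D → ℝ))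
      ((Pi.single x (1:ℝ) : Idx D → ℝ)) (A x) := by
    have h1 : HasDerivAt (fun s : ℝ => s - A x) 1 (A x) := (hasDerivAt_id _).sub_const _
    have h2 := (h1.smul_const ((Pi.single x (1:ℝ) : Idx D → ℝ))).const_add A
    simpa using h2
  have hcomp := (hL (A + ((A x) - A x) • (Pi.single x (1:ℝ) : Idx D → ℝ))).hasFDerivAt.comp_hasDerivAt (A x) hg
  have hAx : A + ((A x) - A x) • (Pi.single x (1:ℝ) : Idx D → ℝ) = A := by simp
  rw [hAx] at hcomp
  have : (fun s : ℝ => L (Function.update A x s))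
      = fun s : ℝ => L (A + (s - A x) • (Pi.single x (1:ℝ) : Idx D → ℝ)) := by
    funext s; rw [hupd s]
  rw [tgrad, this]
  exact hcomp.deriv

theorem aux_fderiv_rep (L : (Idx D → ℝ) → ℝ) (hL : Differentiable ℝ L) (A v : Idx D → ℝ) :
    fderiv ℝ L A v = ∑ x, tgrad D L A x * v x := by
  classical
  have hv : v = ∑ x : Idx D, v x • (Pi.single x (1:ℝ) : Idx D → ℝ) := by
    funext y
    rw [Finset.sum_apply]
    rw [Finset.sum_eq_single y]
    · simp
    · intro b _ hb; simp [Pi.single_eq_of_ne (Ne.symm hb)]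
    · intro h; exact absurd (Finset.mem_univ y) h
  conv_lhs => rw [hv]
  rw [map_sum]
  refine Finset.sum_congr rfl fun x _ => ?_
  rw [map_smul, aux_tgrad_eq L hL A x]
  simp [mul_comm]

theorem aux_went_fin {μ : MTree N} (i : Fin (R μ)) (j : ℕ) :
    went R W μ (i : ℕ) j = W μ i j := by
  rw [went, dif_pos i.isLt]

theorem aux_upd_eq {μ : MTree N} (i : Fin (R μ)) (j : ℕ) (s : ℝ) :
    upd R W μ (i : ℕ) j s
      = replace R W μ (fun i' j' => if (i' : ℕ) = (i : ℕ) ∧ j' = j then s else W μ i' j') := by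
  funext ν i' j'
  by_cases h : ν = μ
  · subst h
    rw [aux_replace_self]
    simp only [upd, eq_self_iff_true, true_and]
  · rw [aux_replace_ne _ h]
    simp only [upd]
    rw [if_neg (fun hc => h hc.1)]

theorem aux_endT_affine {Tb : MTree N} (hnd : Tb.leafList.Nodup) (hbb : Tb.Branching)
    {μ : MTree N} (hμ : μ ∈ Tb.nodes) (i : Fin (R μ)) (j : ℕ) (s : ℝ) (x : Idx D) :
    endT D R (upd R W μ (i : ℕ) j s) Tb x
      = endT D R W Tb x + (s - W μ i j) *
          endT D R (replace R W μ
            (fun i' j' => if (i' : ℕ) = (i : ℕ) ∧ j' = j then 1 else 0)) Tb x := by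
  rw [aux_upd_eq]
  have e : (fun (i' : Fin (R μ)) (j' : ℕ) => if (i' : ℕ) = (i : ℕ) ∧ j' = j then s else W μ i' j')
      = fun i' j' => (s - W μ i j) *
          (fun (i'' : Fin (R μ)) (j'' : ℕ) =>
            if (i'' : ℕ) = (i : ℕ) ∧ j'' = j then (1:ℝ) else 0) i' j' + W μ i' j' := by
    funext i' j'
    by_cases h : (i' : ℕ) = (i : ℕ) ∧ j' = j
    · have hi : i' = i := Fin.ext h.1
      subst hi
      rw [h.2]
      simp
    · simp only [if_neg h]
      ring
  rw [e]
  show interm D R _ Tb 0 x = interm D R W Tb 0 x + _ * interm D R _ Tb 0 x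
  rw [aux_interm_lin _ _ _ hnd hbb hμ 0 x, aux_replace_W]
  ring

theorem aux_dObj_eq (L : (Idx D → ℝ) → ℝ) (hL : Differentiable ℝ L)
    {Tb : MTree N} (hnd : Tb.leafList.Nodup) (hbb : Tb.Branching)
    {μ : MTree N} (hμ : μ ∈ Tb.nodes) (i : Fin (R μ)) (j : ℕ) :
    dObj D L R Tb W μ (i : ℕ) j
      = ∑ x, tgrad D L (endT D R W Tb) x *
          endT D R (replace R W μ
            (fun i' j' => if (i' : ℕ) = (i : ℕ) ∧ j' = j then 1 else 0)) Tb x := by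
  set C := endT D R (replace R W μ
    (fun i' j' => if (i' : ℕ) = (i : ℕ) ∧ j' = j then 1 else 0)) Tb with hC
  set A := endT D R W Tb with hA
  have hfe : (fun s : ℝ => obj D L R Tb (upd R W μ (i : ℕ) j s))
      = fun s : ℝ => L (A + (s - W μ i j) • C) := by
    funext s
    rw [obj]
    congr 1
    funext x
    rw [aux_endT_affine hnd hbb hμ i j s x]
    rfl
  have hg : HasDerivAt (fun s : ℝ => A + (s - W μ i j) • C) C (W μ i j) := by
    have h1 : HasDerivAt (fun s : ℝ => s - W μ i j) 1 (W μ i j) := (hasDerivAt_id _).sub_const _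
    have h2 := (h1.smul_const C).const_add A
    simpa using h2
  have hcomp := (hL (A + (W μ i j - W μ i j) • C)).hasFDerivAt.comp_hasDerivAt (W μ i j) hg
  have hAx : A + (W μ i j - W μ i j) • C = A := by simp
  rw [hAx] at hcomp
  have hcomp' : HasDerivAt (fun s : ℝ => L (A + (s - W μ i j) • C))
      (fderiv ℝ L A C) (W μ i j) := hcomp
  rw [dObj, aux_went_fin, hfe]
  rw [hcomp'.deriv]
  exact aux_fderiv_rep L hL A C

theorem aux_row_sum {Tb : MTree N} (hnd : Tb.leafList.Nodup) (hbb : Tb.Branching)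
    {ts : List (MTree N)} (hν : MTree.node ts ∈ Tb.nodes) (r : Fin (R (MTree.node ts)))
    (x : Idx D) :
    ∑ j : Fin (Rpar R Tb (MTree.node ts)), W (MTree.node ts) r (j : ℕ) *
        interm D R (replace R W (MTree.node ts)
          (fun i' j' => if (i' : ℕ) = (r : ℕ) ∧ j' = (j : ℕ) then 1 else 0)) Tb 0 x
      = interm D R (replace R W (MTree.node ts) (padRow R W (MTree.node ts) (r : ℕ))) Tb 0 x := by
  rw [← aux_interm_sum (Finset.univ)
    (fun j : Fin (Rpar R Tb (MTree.node ts)) => W (MTree.node ts) r (j : ℕ))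
    (fun j => fun i' j' => if (i' : ℕ) = (r : ℕ) ∧ j' = (j : ℕ) then 1 else 0) hnd hbb hν 0 x]
  refine aux_interm_dep hnd hbb ?_ (aux_mem_nodes_self Tb) hν 0 x ?_
  · intro i' j' hj'
    simp only [padRow]
    by_cases hir : (i' : ℕ) = (r : ℕ)
    · rw [if_pos hir]
      have hi : i' = r := Fin.ext hir
      subst hi
      rw [Finset.sum_eq_single (⟨j', hj'⟩ : Fin (Rpar R Tb (MTree.node ts)))]
      · rw [if_pos ⟨hir, rfl⟩, mul_one]
      · intro b _ hb
        rw [if_neg, mul_zero]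
        rintro ⟨-, hbj⟩
        exact hb (Fin.ext hbj.symm)
      · intro h; exact absurd (Finset.mem_univ _) h
    · rw [if_neg hir]
      refine Finset.sum_eq_zero fun b _ => ?_
      rw [if_neg (fun hc => hir hc.1), mul_zero]
  · intro hTν
    rw [← hTν, aux_Rpar_root]
    omega

theorem aux_col_sum {Tb : MTree N} (hnd : Tb.leafList.Nodup) (hbb : Tb.Branching)
    {ts : List (MTree N)} (hν : MTree.node ts ∈ Tb.nodes) (r : Fin (R (MTree.node ts)))
    {c : MTree N} (hc : c ∈ ts) (x : Idx D) :
    ∑ i : Fin (R c), W c i (r : ℕ) *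
        interm D R (replace R W c
          (fun i' j' => if (i' : ℕ) = (i : ℕ) ∧ j' = (r : ℕ) then 1 else 0)) Tb 0 x
      = interm D R (replace R W (MTree.node ts) (padRow R W (MTree.node ts) (r : ℕ))) Tb 0 x := by
  have hcTb : c ∈ Tb.nodes := aux_nodes_trans (aux_mem_nodes_child hc) hν
  rw [← aux_interm_sum (Finset.univ) (fun i : Fin (R c) => W c i (r : ℕ))
    (fun i => fun i' j' => if (i' : ℕ) = (i : ℕ) ∧ j' = (r : ℕ) then 1 else 0) hnd hbb hcTb 0 x]
  have hM : (fun (i' : Fin (R c)) (j' : ℕ) => ∑ i : Fin (R c),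
        W c i (r : ℕ) * (if (i' : ℕ) = (i : ℕ) ∧ j' = (r : ℕ) then (1:ℝ) else 0))
      = padCol R W c (r : ℕ) := by
    funext i' j'
    simp only [padCol]
    by_cases hj : j' = (r : ℕ)
    · rw [if_pos hj, Finset.sum_eq_single i']
      · rw [if_pos ⟨rfl, hj⟩, mul_one]
      · intro b _ hb
        rw [if_neg, mul_zero]
        rintro ⟨hbi, -⟩
        exact hb (Fin.ext hbi.symm)
      · intro h; exact absurd (Finset.mem_univ _) h
    · rw [if_neg hj]
      refine Finset.sum_eq_zero fun b _ => ?_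
      rw [if_neg (fun hcond => hj hcond.2), mul_zero]
  rw [hM]
  exact aux_key hnd hbb hν r hc 0 x

theorem aux_hasDeriv_rowSq (L : (Idx D → ℝ) → ℝ) (hL : Differentiable ℝ L)
    {Tb : MTree N} (hndb : Tb.leafList.Nodup) (hbb : Tb.Branching)
    {ts : List (MTree N)} (hν : MTree.node ts ∈ Tb.nodes) (r : Fin (R (MTree.node ts)))
    (Wt : ℝ → ∀ ν : MTree N, Fin (R ν) → ℕ → ℝ) (hflow : GradFlow D L R Tb Wt)
    {s : ℝ} (hs : 0 ≤ s) :
    HasDerivAt (fun u => rowSq R (Wt u) Tb (MTree.node ts) (r : ℕ))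
      (-2 * ∑ x, tgrad D L (endT D R (Wt s) Tb) x *
        interm D R (replace R (Wt s) (MTree.node ts)
          (padRow R (Wt s) (MTree.node ts) (r : ℕ))) Tb 0 x) s := by
  have hfun : (fun u => rowSq R (Wt u) Tb (MTree.node ts) (r : ℕ))
      = fun u => ∑ j : Fin (Rpar R Tb (MTree.node ts)), (Wt u (MTree.node ts) r (j : ℕ))^2 := by
    funext u
    rw [rowSq]
    refine Finset.sum_congr rfl fun j _ => ?_
    rw [aux_went_fin]
  rw [hfun]
  have hsq : ∀ j : Fin (Rpar R Tb (MTree.node ts)),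
      HasDerivAt (fun u => (Wt u (MTree.node ts) r (j : ℕ))^2)
        (2 * (Wt s (MTree.node ts) r (j : ℕ)) *
          (- dObj D L R Tb (Wt s) (MTree.node ts) ((r : ℕ)) ((j : ℕ)))) s := by
    intro j
    have h := (hflow (MTree.node ts) r (j : ℕ) s hs).fun_pow 2
    simpa using h
  have hsum := HasDerivAt.fun_sum (fun j (_ : j ∈ Finset.univ) => hsq j)
  refine hsum.congr_deriv (Eq.symm ?_)
  have hd : ∀ j : Fin (Rpar R Tb (MTree.node ts)),
      dObj D L R Tb (Wt s) (MTree.node ts) ((r : ℕ)) ((j : ℕ))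
        = ∑ x, tgrad D L (endT D R (Wt s) Tb) x *
            endT D R (replace R (Wt s) (MTree.node ts)
              (fun i' j' => if (i' : ℕ) = (r : ℕ) ∧ j' = (j : ℕ) then 1 else 0)) Tb x :=
    fun j => aux_dObj_eq L hL hndb hbb hν r (j : ℕ)
  calc -2 * ∑ x, tgrad D L (endT D R (Wt s) Tb) x *
        interm D R (replace R (Wt s) (MTree.node ts)
          (padRow R (Wt s) (MTree.node ts) (r : ℕ))) Tb 0 x
      = ∑ x, ∑ j : Fin (Rpar R Tb (MTree.node ts)),
          (-2) * (tgrad D L (endT D R (Wt s) Tb) x * (Wt s (MTree.node ts) r (j : ℕ) *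
            interm D R (replace R (Wt s) (MTree.node ts)
              (fun i' j' => if (i' : ℕ) = (r : ℕ) ∧ j' = (j : ℕ) then 1 else 0)) Tb 0 x)) := by
        rw [Finset.mul_sum]
        refine Finset.sum_congr rfl fun x _ => ?_
        rw [← aux_row_sum hndb hbb hν r x, Finset.mul_sum, Finset.mul_sum]
    _ = ∑ j : Fin (Rpar R Tb (MTree.node ts)), ∑ x,
          (-2) * (tgrad D L (endT D R (Wt s) Tb) x * (Wt s (MTree.node ts) r (j : ℕ) *
            interm D R (replace R (Wt s) (MTree.node ts)
              (fun i' j' => if (i' : ℕ) = (r : ℕ) ∧ j' = (j : ℕ) then 1 else 0)) Tb 0 x)) :=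
        Finset.sum_comm
    _ = ∑ j : Fin (Rpar R Tb (MTree.node ts)),
          2 * (Wt s (MTree.node ts) r (j : ℕ)) *
            (- dObj D L R Tb (Wt s) (MTree.node ts) ((r : ℕ)) ((j : ℕ))) := by
        refine Finset.sum_congr rfl fun j _ => ?_
        rw [hd j, mul_neg, Finset.mul_sum, ← Finset.sum_neg_distrib]
        refine Finset.sum_congr rfl fun x _ => ?_
        show (-2) * _ = -(2 * Wt s (MTree.node ts) r (j : ℕ) *
          (tgrad D L (endT D R (Wt s) Tb) x * interm D R (replace R (Wt s) (MTree.node ts)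
            (fun i' j' => if (i' : ℕ) = (r : ℕ) ∧ j' = (j : ℕ) then 1 else 0)) Tb 0 x))
        ring

theorem aux_hasDeriv_colSq (L : (Idx D → ℝ) → ℝ) (hL : Differentiable ℝ L)
    {Tb : MTree N} (hndb : Tb.leafList.Nodup) (hbb : Tb.Branching)
    {ts : List (MTree N)} (hν : MTree.node ts ∈ Tb.nodes) (r : Fin (R (MTree.node ts)))
    {c : MTree N} (hc : c ∈ ts)
    (Wt : ℝ → ∀ ν : MTree N, Fin (R ν) → ℕ → ℝ) (hflow : GradFlow D L R Tb Wt)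
    {s : ℝ} (hs : 0 ≤ s) :
    HasDerivAt (fun u => colSq R (Wt u) c (r : ℕ))
      (-2 * ∑ x, tgrad D L (endT D R (Wt s) Tb) x *
        interm D R (replace R (Wt s) (MTree.node ts)
          (padRow R (Wt s) (MTree.node ts) (r : ℕ))) Tb 0 x) s := by
  have hfun : (fun u => colSq R (Wt u) c (r : ℕ))
      = fun u => ∑ i : Fin (R c), (Wt u c i (r : ℕ))^2 := by
    funext u; rw [colSq]
  rw [hfun]
  have hsq : ∀ i : Fin (R c),
      HasDerivAt (fun u => (Wt u c i (r : ℕ))^2)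
        (2 * (Wt s c i (r : ℕ)) * (- dObj D L R Tb (Wt s) c ((i : ℕ)) ((r : ℕ)))) s := by
    intro i
    have h := (hflow c i (r : ℕ) s hs).fun_pow 2
    simpa using h
  have hsum := HasDerivAt.fun_sum (fun i (_ : i ∈ Finset.univ) => hsq i)
  refine hsum.congr_deriv (Eq.symm ?_)
  have hcTb : c ∈ Tb.nodes := aux_nodes_trans (aux_mem_nodes_child hc) hν
  have hd : ∀ i : Fin (R c),
      dObj D L R Tb (Wt s) c ((i : ℕ)) ((r : ℕ))
        = ∑ x, tgrad D L (endT D R (Wt s) Tb) x *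
            endT D R (replace R (Wt s) c
              (fun i' j' => if (i' : ℕ) = (i : ℕ) ∧ j' = (r : ℕ) then 1 else 0)) Tb x :=
    fun i => aux_dObj_eq L hL hndb hbb hcTb i (r : ℕ)
  calc -2 * ∑ x, tgrad D L (endT D R (Wt s) Tb) x *
        interm D R (replace R (Wt s) (MTree.node ts)
          (padRow R (Wt s) (MTree.node ts) (r : ℕ))) Tb 0 x
      = ∑ x, ∑ i : Fin (R c),
          (-2) * (tgrad D L (endT D R (Wt s) Tb) x * (Wt s c i (r : ℕ) *
            interm D R (replace R (Wt s) c
              (fun i' j' => if (i' : ℕ) = (i : ℕ) ∧ j' = (r : ℕ) then 1 else 0)) Tb 0 x)) := by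
        rw [Finset.mul_sum]
        refine Finset.sum_congr rfl fun x _ => ?_
        rw [← aux_col_sum hndb hbb hν r hc x, Finset.mul_sum, Finset.mul_sum]
    _ = ∑ i : Fin (R c), ∑ x,
          (-2) * (tgrad D L (endT D R (Wt s) Tb) x * (Wt s c i (r : ℕ) *
            interm D R (replace R (Wt s) c
              (fun i' j' => if (i' : ℕ) = (i : ℕ) ∧ j' = (r : ℕ) then 1 else 0)) Tb 0 x)) :=
        Finset.sum_comm
    _ = ∑ i : Fin (R c),
          2 * (Wt s c i (r : ℕ)) * (- dObj D L R Tb (Wt s) c ((i : ℕ)) ((r : ℕ))) := by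
        refine Finset.sum_congr rfl fun i _ => ?_
        rw [hd i, mul_neg, Finset.mul_sum, ← Finset.sum_neg_distrib]
        refine Finset.sum_congr rfl fun x _ => ?_
        show (-2) * _ = -(2 * Wt s c i (r : ℕ) *
          (tgrad D L (endT D R (Wt s) Tb) x * interm D R (replace R (Wt s) c
            (fun i' j' => if (i' : ℕ) = (i : ℕ) ∧ j' = (r : ℕ) then 1 else 0)) Tb 0 x))
        ring

theorem aux_balance (L : (Idx D → ℝ) → ℝ) (hL : Differentiable ℝ L)
    {Tb : MTree N} (hndb : Tb.leafList.Nodup) (hbb : Tb.Branching)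
    {ts : List (MTree N)} (hν : MTree.node ts ∈ Tb.nodes) (r : Fin (R (MTree.node ts)))
    {c : MTree N} (hc : c ∈ ts)
    (Wt : ℝ → ∀ ν : MTree N, Fin (R ν) → ℕ → ℝ) (hflow : GradFlow D L R Tb Wt)
    (h0 : colSq R (Wt 0) c (r : ℕ) = rowSq R (Wt 0) Tb (MTree.node ts) (r : ℕ))
    {t : ℝ} (ht : 0 ≤ t) :
    colSq R (Wt t) c (r : ℕ) = rowSq R (Wt t) Tb (MTree.node ts) (r : ℕ) := by
  rcases eq_or_lt_of_le ht with heq | htpos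
  · rw [← heq]; exact h0
  have key : ∀ u, 0 ≤ u → HasDerivAt (fun v => rowSq R (Wt v) Tb (MTree.node ts) (r : ℕ)
      - colSq R (Wt v) c (r : ℕ)) 0 u := by
    intro u hu
    have h := (aux_hasDeriv_rowSq L hL hndb hbb hν r Wt hflow hu).fun_sub
      (aux_hasDeriv_colSq L hL hndb hbb hν r hc Wt hflow hu)
    simpa using h
  have hcont : ContinuousOn (fun v => rowSq R (Wt v) Tb (MTree.node ts) (r : ℕ)
      - colSq R (Wt v) c (r : ℕ)) (Set.Icc 0 t) := by
    intro u hu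
    exact (key u hu.1).continuousAt.continuousWithinAt
  have hder : ∀ u ∈ Set.Ico (0:ℝ) t, HasDerivWithinAt (fun v => rowSq R (Wt v) Tb (MTree.node ts) (r : ℕ)
      - colSq R (Wt v) c (r : ℕ)) 0 (Set.Ici u) u := fun u hu => (key u hu.1).hasDerivWithinAt
  have hconst := constant_of_has_deriv_right_zero hcont hder t
    (Set.mem_Icc.2 ⟨ht, le_refl t⟩)
  have : rowSq R (Wt t) Tb (MTree.node ts) (r : ℕ) - colSq R (Wt t) c (r : ℕ)
      = rowSq R (Wt 0) Tb (MTree.node ts) (r : ℕ) - colSq R (Wt 0) c (r : ℕ) := hconst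
  linarith [this, h0]

theorem aux_list_prod_deriv {α : Type*} (f : α → ℝ → ℝ) (g v : ℝ) (t : ℝ) :
    ∀ l : List α, (∀ a ∈ l, HasDerivAt (f a) g t ∧ f a t = v) →
    HasDerivAt (fun u => (l.map fun a => f a u).prod)
      (l.length * g * v ^ (l.length - 1)) t := by
  intro l
  induction l with
  | nil =>
      intro _
      simpa using hasDerivAt_const t (1:ℝ)
  | cons a l ih =>
      intro h
      have ha := h a (List.mem_cons_self)
      have hl := ih (fun b hb => h b (List.mem_cons_of_mem _ hb))
      have hmul := ha.1.fun_mul hl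
      have hPt : (l.map fun b => f b t).prod = v ^ l.length := by
        rw [List.prod_eq_pow_card _ v, List.length_map]
        intro y hy
        obtain ⟨b, hb, rfl⟩ := List.mem_map.1 hy
        exact (h b (List.mem_cons_of_mem _ hb)).2
      have heq : (fun u => (List.map (fun b => f b u) (a :: l)).prod)
          = fun u => f a u * (List.map (fun b => f b u) l).prod := by
        funext u; rw [List.map_cons, List.prod_cons]
      rw [heq]
      refine hmul.congr_deriv (Eq.symm ?_)
      rw [hPt, ha.2]
      simp only [List.length_cons]
      cases l with
      | nil => simp
      | cons b l' =>
          simp only [List.length_cons, Nat.add_sub_cancel]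
          push_cast
          ring

theorem aux_bigO_of_deriv {f : ℝ → ℝ} {d t : ℝ} (h : HasDerivAt f d t) (h0 : f t = 0) :
    f =O[nhds t] (fun u => u - t) := by
  have h1 := h.isBigO_sub
  simpa [h0] using h1

theorem aux_sqrt_bigO {f : ℝ → ℝ} {t : ℝ} (hf : ∀ u, 0 ≤ f u)
    (h : f =O[nhds t] (fun u => (u - t) * (u - t))) :
    (fun u => Real.sqrt (f u)) =O[nhds t] (fun u => u - t) := by
  obtain ⟨c, hc0, hc⟩ := h.exists_nonneg
  rw [Asymptotics.isBigO_iff]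
  refine ⟨Real.sqrt c, ?_⟩
  rw [Asymptotics.isBigOWith_iff] at hc
  filter_upwards [hc] with u hu
  simp only [Real.norm_eq_abs] at hu ⊢
  have h1 : f u ≤ c * ((u - t) * (u - t)) := by
    calc f u = |f u| := (abs_of_nonneg (hf u)).symm
    _ ≤ c * |(u - t) * (u - t)| := hu
    _ = c * ((u - t) * (u - t)) := by rw [abs_mul_self]
  have h2 : |Real.sqrt (f u)| = Real.sqrt (f u) := abs_of_nonneg (Real.sqrt_nonneg _)
  rw [h2]
  calc Real.sqrt (f u) ≤ Real.sqrt (c * ((u - t) * (u - t))) := Real.sqrt_le_sqrt h1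
  _ = Real.sqrt c * Real.sqrt ((u - t) * (u - t)) := Real.sqrt_mul hc0 _
  _ = Real.sqrt c * |u - t| := by rw [Real.sqrt_mul_self_eq_abs]

theorem aux_cont_listprod {α : Type*} (l : List α) (f : α → ℝ → ℝ) (t : ℝ)
    (h : ∀ a ∈ l, ContinuousAt (f a) t) :
    ContinuousAt (fun u => (l.map fun a => f a u).prod) t := by
  induction l with
  | nil => simpa using continuousAt_const
  | cons a l ih =>
      have := (h a (List.mem_cons_self)).fun_mul (ih (fun b hb => h b (List.mem_cons_of_mem _ hb)))
      simpa using this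

end Aux

-- MARKER


end HTF
open HTF HTF.MTree in
/-- Theorem 1 in the paper: under gradient flow with unbalancedness
magnitude zero at initialization, the norm of each local component evolves by
`d/dt σ^(ν,r)(t) = σ^(ν,r)(t)^{2 - 2/L_ν} · L_ν · ⟨-∇L_H(W_H(t)), Ĉ^(ν,r)(t)⟩`,
where `L_ν = |C(ν)| + 1`. -/
theorem statement11 {N : ℕ} (D : Fin N → ℕ) (L : (Idx D → ℝ) → ℝ)
    (hL : Differentiable ℝ L) (hLs : LocSmooth D L) (hL0 : ∀ A, 0 ≤ L A)
    (T : MTree N) (hT : T.Valid)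
    (R : MTree N → ℕ) (hR : ∀ i : Fin N, R (MTree.leaf i) = D i)
    (Wt : ℝ → ∀ ν : MTree N, Fin (R ν) → ℕ → ℝ)
    (hflow : GradFlow D L R T Wt)
    (hbal : ∀ ν' ∈ T.nodes, ν'.IsInterior → ∀ r' : Fin (R ν'), ∀ c ∈ ν'.children,
      colSq R (Wt 0) c (r' : ℕ) = rowSq R (Wt 0) T ν' (r' : ℕ))
    (ν : MTree N) (hν : ν ∈ T.nodes) (hint : ν.IsInterior) (r : Fin (R ν))
    (t : ℝ) (ht : 0 ≤ t) :
    HasDerivAt (fun s : ℝ => sigmaLoc R (Wt s) T ν (r : ℕ))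
      (sigmaLoc R (Wt t) T ν (r : ℕ) ^ ((2 : ℝ) - 2 / (ν.children.length + 1 : ℝ)) *
        (ν.children.length + 1 : ℝ) *
        tinner D (fun x => - tgrad D L (endT D R (Wt t) T) x) (hatC D R (Wt t) T ν (r : ℕ))) t := by
  classical
  obtain ⟨hnd, -, hbb⟩ := hT
  cases ν with
  | leaf i => simp [MTree.IsInterior] at hint
  | node ts =>
  have hts : ts ≠ [] := ((aux_branching_node ts).1 (aux_branching_of_mem hν hbb)).1
  have hchild : (MTree.node ts).children = ts := rfl
  have hlen_pos : 0 < ts.length := List.length_pos_iff.2 hts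
  -- balancedness at time t
  have hbal0 : ∀ c ∈ ts, colSq R (Wt 0) c (r : ℕ) = rowSq R (Wt 0) T (MTree.node ts) (r : ℕ) :=
    fun c hc => hbal (MTree.node ts) hν trivial r c (hchild ▸ hc)
  have hbalt : ∀ c ∈ ts, colSq R (Wt t) c (r : ℕ) = rowSq R (Wt t) T (MTree.node ts) (r : ℕ) :=
    fun c hc => aux_balance L hL hnd hbb hν r hc Wt hflow (hbal0 c hc) ht
  set q := rowSq R (Wt t) T (MTree.node ts) (r : ℕ) with hqdef
  have hq0 : 0 ≤ q := Finset.sum_nonneg fun j _ => sq_nonneg _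
  set v := Real.sqrt q with hvdef
  set G := ∑ x, tgrad D L (endT D R (Wt t) T) x *
      interm D R (replace R (Wt t) (MTree.node ts)
        (padRow R (Wt t) (MTree.node ts) (r : ℕ))) T 0 x with hGdef
  have hσfun : ∀ u, sigmaLoc R (Wt u) T (MTree.node ts) (r : ℕ)
      = Real.sqrt (rowSq R (Wt u) T (MTree.node ts) (r : ℕ))
        * (ts.map fun c => Real.sqrt (colSq R (Wt u) c (r : ℕ))).prod := fun u => rfl
  have hσt_val : sigmaLoc R (Wt t) T (MTree.node ts) (r : ℕ) = v ^ (ts.length + 1) := by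
    rw [hσfun t]
    have hmap : ∀ y ∈ ts.map fun c => Real.sqrt (colSq R (Wt t) c (r : ℕ)), y = v := by
      intro y hy
      obtain ⟨c, hc, rfl⟩ := List.mem_map.1 hy
      rw [hbalt c hc, hvdef]
    rw [List.prod_eq_pow_card _ v hmap, List.length_map, ← hqdef, ← hvdef, pow_succ']
  rcases eq_or_lt_of_le hq0 with hq_eq | hq_pos
  · -- degenerate case : q = 0
    have hval0 : sigmaLoc R (Wt t) T (MTree.node ts) (r : ℕ) = 0 := by
      rw [hσt_val, hvdef, ← hq_eq, Real.sqrt_zero, zero_pow]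
      omega
    have he_ne : (2 : ℝ) - 2 / (((MTree.node ts).children.length : ℝ) + 1) ≠ 0 := by
      rw [hchild]
      have h1 : (1:ℝ) ≤ (ts.length : ℝ) := by exact_mod_cast hlen_pos
      have h2 : (2:ℝ) / ((ts.length : ℝ) + 1) ≤ 1 := by
        rw [div_le_one (by linarith)]
        linarith
      intro h
      have : (2:ℝ) / ((ts.length : ℝ) + 1) = 2 := by linarith
      linarith
    have hRHS : sigmaLoc R (Wt t) T (MTree.node ts) (r : ℕ) ^
          ((2 : ℝ) - 2 / (((MTree.node ts).children.length : ℝ) + 1)) *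
          (((MTree.node ts).children.length : ℝ) + 1) *
          tinner D (fun x => - tgrad D L (endT D R (Wt t) T) x)
            (hatC D R (Wt t) T (MTree.node ts) (r : ℕ)) = 0 := by
      rw [hval0, Real.zero_rpow he_ne, zero_mul, zero_mul]
    rw [show ((((MTree.node ts).children.length : ℝ)) + 1) = (((MTree.node ts).children.length : ℝ) + 1) from rfl] at hRHS
    rw [hRHS]
    -- now prove HasDerivAt σfun 0 t via little-o
    have hrow_fun : (fun u => rowSq R (Wt u) T (MTree.node ts) (r : ℕ))
        = fun u => ∑ j : Fin (Rpar R T (MTree.node ts)), (Wt u (MTree.node ts) r (j : ℕ))^2 := by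
      funext u
      rw [rowSq]
      exact Finset.sum_congr rfl fun j _ => by rw [aux_went_fin]
    have hrow0 : ∀ j : Fin (Rpar R T (MTree.node ts)), Wt t (MTree.node ts) r (j : ℕ) = 0 := by
      intro j
      have hz : ∑ j : Fin (Rpar R T (MTree.node ts)), (Wt t (MTree.node ts) r (j : ℕ))^2 = 0 := by
        have hz0 : rowSq R (Wt t) T (MTree.node ts) (r : ℕ) = 0 := by rw [← hqdef, ← hq_eq]
        rw [rowSq] at hz0
        rw [← hz0]
        exact Finset.sum_congr rfl fun j _ => by rw [aux_went_fin]
      have := (Finset.sum_eq_zero_iff_of_nonneg (fun j _ => sq_nonneg _)).1 hz j (Finset.mem_univ j)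
      exact (pow_eq_zero_iff two_ne_zero).mp this
    have hcol0 : ∀ c ∈ ts, ∀ i : Fin (R c), Wt t c i (r : ℕ) = 0 := by
      intro c hc i
      have hz : colSq R (Wt t) c (r : ℕ) = 0 := by rw [hbalt c hc, ← hq_eq]
      rw [colSq] at hz
      have := (Finset.sum_eq_zero_iff_of_nonneg (fun i _ => sq_nonneg _)).1 hz i (Finset.mem_univ i)
      exact (pow_eq_zero_iff two_ne_zero).mp this
    have hrow_bigO : (fun u => rowSq R (Wt u) T (MTree.node ts) (r : ℕ))
        =O[nhds t] (fun u => (u - t) * (u - t)) := by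
      rw [hrow_fun]
      refine Asymptotics.IsBigO.fun_sum fun j _ => ?_
      have hbig := aux_bigO_of_deriv (hflow (MTree.node ts) r (j : ℕ) t ht) (hrow0 j)
      have := hbig.mul hbig
      refine this.congr_left fun u => ?_
      rw [← pow_two]
    have hcol_bigO : ∀ c ∈ ts, (fun u => colSq R (Wt u) c (r : ℕ))
        =O[nhds t] (fun u => (u - t) * (u - t)) := by
      intro c hc
      have hcfun : (fun u => colSq R (Wt u) c (r : ℕ))
          = fun u => ∑ i : Fin (R c), (Wt u c i (r : ℕ))^2 := by
        funext u; rw [colSq]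
      rw [hcfun]
      refine Asymptotics.IsBigO.fun_sum fun i _ => ?_
      have hbig := aux_bigO_of_deriv (hflow c i (r : ℕ) t ht) (hcol0 c hc i)
      have := hbig.mul hbig
      refine this.congr_left fun u => ?_
      rw [← pow_two]
    have hF1 : (fun u => Real.sqrt (rowSq R (Wt u) T (MTree.node ts) (r : ℕ)))
        =O[nhds t] (fun u => u - t) :=
      aux_sqrt_bigO (fun u => Finset.sum_nonneg fun j _ => sq_nonneg _) hrow_bigO
    obtain ⟨c₀, rest, rfl⟩ : ∃ c₀ rest, ts = c₀ :: rest := by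
      cases ts with
      | nil => exact absurd rfl hts
      | cons a l => exact ⟨a, l, rfl⟩
    have hF2 : (fun u => Real.sqrt (colSq R (Wt u) c₀ (r : ℕ)))
        =O[nhds t] (fun u => u - t) :=
      aux_sqrt_bigO (fun u => Finset.sum_nonneg fun i _ => sq_nonneg _)
        (hcol_bigO c₀ (List.mem_cons_self))
    have hRest_cont : ContinuousAt
        (fun u => (rest.map fun c => Real.sqrt (colSq R (Wt u) c (r : ℕ))).prod) t := by
      refine aux_cont_listprod rest _ t fun c hc => ?_
      have hD := aux_hasDeriv_colSq L hL hnd hbb hν r (List.mem_cons_of_mem _ hc) Wt hflow ht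
      exact Real.continuous_sqrt.continuousAt.comp hD.continuousAt
    have hRest_O : (fun u => (rest.map fun c => Real.sqrt (colSq R (Wt u) c (r : ℕ))).prod)
        =O[nhds t] (fun _ => (1:ℝ)) :=
      hRest_cont.isBigO_one ℝ
    have h12 := hF1.mul (hF2.mul hRest_O)
    have hσO : (fun u => sigmaLoc R (Wt u) T (MTree.node (c₀ :: rest)) (r : ℕ))
        =O[nhds t] (fun u => (u - t) * ((u - t) * 1)) := by
      refine h12.congr_left fun u => ?_
      rw [hσfun u, List.map_cons, List.prod_cons]
    have hquad : (fun u : ℝ => (u - t) * ((u - t) * 1)) =o[nhds t] (fun u => u - t) := by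
      have h1 : (fun u : ℝ => u - t) =o[nhds t] (fun _ : ℝ => (1:ℝ)) := by
        rw [Asymptotics.isLittleO_one_iff]
        have h0 : Filter.Tendsto (fun u : ℝ => u - t) (nhds t) (nhds (t - t)) :=
          (Filter.tendsto_id (x := nhds t)).sub_const t
        simpa using h0
      have h2 := h1.mul_isBigO (Asymptotics.isBigO_refl (fun u : ℝ => (u - t) * 1) (nhds t))
      refine h2.trans_isBigO ?_
      refine (Asymptotics.isBigO_refl _ _).congr_left fun u => ?_
      ring
    have hfin := hσO.trans_isLittleO hquad
    rw [hasDerivAt_iff_isLittleO]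
    simp only [smul_zero, sub_zero]
    rw [hval0]
    simpa using hfin
  · -- main case : q > 0
    have hv_pos : 0 < v := Real.sqrt_pos.2 hq_pos
    have hσ_pos : 0 < sigmaLoc R (Wt t) T (MTree.node ts) (r : ℕ) := by
      rw [hσt_val]; positivity
    have hσ_ne := ne_of_gt hσ_pos
    set g := (-2 * G) / (2 * v) with hgdef
    have hrow_sqrt : HasDerivAt
        (fun u => Real.sqrt (rowSq R (Wt u) T (MTree.node ts) (r : ℕ))) g t := by
      have h := (aux_hasDeriv_rowSq L hL hnd hbb hν r Wt hflow ht).sqrt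
        (by rw [← hqdef]; exact ne_of_gt hq_pos)
      rw [← hqdef, ← hvdef] at h
      exact h
    have hcol_sqrt : ∀ c ∈ ts, HasDerivAt
        (fun u => Real.sqrt (colSq R (Wt u) c (r : ℕ))) g t := by
      intro c hc
      have h := (aux_hasDeriv_colSq L hL hnd hbb hν r hc Wt hflow ht).sqrt
        (by rw [hbalt c hc]; exact ne_of_gt hq_pos)
      rw [hbalt c hc, ← hvdef] at h
      exact h
    set f : MTree N → ℝ → ℝ := fun μ u =>
      if μ = MTree.node ts then Real.sqrt (rowSq R (Wt u) T (MTree.node ts) (r : ℕ))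
      else Real.sqrt (colSq R (Wt u) μ (r : ℕ)) with hfdef
    have hf : ∀ a ∈ (MTree.node ts :: ts), HasDerivAt (f a) g t ∧ f a t = v := by
      intro a ha
      rcases List.mem_cons.1 ha with heq | ha
      · constructor
        · have hfa : f a = fun u => Real.sqrt (rowSq R (Wt u) T (MTree.node ts) (r : ℕ)) := by
            rw [hfdef]; simp [heq]
          rw [hfa]; exact hrow_sqrt
        · rw [hfdef]
          simp only [heq, if_pos]
          rfl
      · have hane : a ≠ MTree.node ts := by
          intro h
          have := aux_sizeOf_lt_of_mem ha
          rw [h] at this; omega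
        constructor
        · have hfa : f a = fun u => Real.sqrt (colSq R (Wt u) a (r : ℕ)) := by
            rw [hfdef]; simp [hane]
          rw [hfa]; exact hcol_sqrt a ha
        · rw [hfdef]
          simp only [if_neg hane]
          rw [hbalt a ha, hvdef]
    have hprod := aux_list_prod_deriv f g v t (MTree.node ts :: ts) hf
    have hfuneq : (fun u => sigmaLoc R (Wt u) T (MTree.node ts) (r : ℕ))
        = fun u => ((MTree.node ts :: ts).map fun a => f a u).prod := by
      funext u
      rw [hσfun u, List.map_cons, List.prod_cons, hfdef]
      simp only [if_pos rfl]
      congr 2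
      refine (List.map_congr_left fun c hc => ?_).symm
      have hcne : c ≠ MTree.node ts := by
        intro h
        have := aux_sizeOf_lt_of_mem hc
        rw [h] at this; omega
      rw [if_neg hcne]
    rw [hfuneq]
    convert hprod using 1
    -- value identity
    have hhatC : hatC D R (Wt t) T (MTree.node ts) (r : ℕ)
        = fun x => (sigmaLoc R (Wt t) T (MTree.node ts) (r : ℕ))⁻¹ *
            interm D R (replace R (Wt t) (MTree.node ts)
              (padRow R (Wt t) (MTree.node ts) (r : ℕ))) T 0 x := by
      rw [hatC, if_neg hσ_ne]
      funext x
      have e : (fun (i : Fin (R (MTree.node ts))) (j : ℕ) =>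
            if (i : ℕ) = (r : ℕ) then (sigmaLoc R (Wt t) T (MTree.node ts) (r : ℕ))⁻¹ *
              Wt t (MTree.node ts) i j else 0)
          = fun i j => (sigmaLoc R (Wt t) T (MTree.node ts) (r : ℕ))⁻¹ *
              padRow R (Wt t) (MTree.node ts) (r : ℕ) i j + (fun _ _ => (0:ℝ)) i j := by
        funext i j
        simp only [padRow]
        by_cases h : (i : ℕ) = (r : ℕ)
        · simp [h]
        · simp [h]
      show interm D R _ T 0 x = _
      rw [e, aux_interm_lin _ _ _ hnd hbb hν 0 x, aux_interm_zero hnd hbb hν 0 x, add_zero]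
    have htinner : tinner D (fun x => - tgrad D L (endT D R (Wt t) T) x)
          (hatC D R (Wt t) T (MTree.node ts) (r : ℕ))
        = -(sigmaLoc R (Wt t) T (MTree.node ts) (r : ℕ))⁻¹ * G := by
      rw [tinner, hhatC, hGdef, Finset.mul_sum]
      refine Finset.sum_congr rfl fun x _ => ?_
      show - tgrad D L (endT D R (Wt t) T) x * _ = _
      ring
    rw [htinner, hσt_val]
    have hrpow : ((v ^ (ts.length + 1)) : ℝ) ^
          ((2 : ℝ) - 2 / (((MTree.node ts).children.length : ℝ) + 1))
        = v ^ (2 * ts.length) := by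
      rw [hchild, ← Real.rpow_natCast v (ts.length + 1), ← Real.rpow_mul (Real.sqrt_nonneg q),
        ← Real.rpow_natCast v (2 * ts.length)]
      congr 1
      have hne : ((ts.length : ℝ) + 1) ≠ 0 := by positivity
      push_cast
      field_simp
      ring
    rw [hrpow]
    simp only [List.length_cons, Nat.add_sub_cancel, hchild]
    rw [hgdef]
    have hvne := ne_of_gt hv_pos
    have hpow1 : v ^ (2 * ts.length) = v ^ ts.length * v ^ ts.length := by
      rw [two_mul, pow_add]
    have hpow2 : v ^ (ts.length + 1) = v ^ ts.length * v := by rw [pow_succ]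
    rw [hpow1, hpow2]
    field_simp
    push_cast
    ring
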